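/- arXiv:math/0702293 — 4 statements merged into one kernel-verified Lean document; each statement's English description precedes it below -/
import Mathlib

section
/- Let A and B be abelian groups. If Ext^1_ℤ(A, B*) = 0 and B* ≠ 0, where B* = Hom(B, ℤ), then A is a Whitehead group. -/
open CategoryTheory

/-- `Ext1 A C` is the abelian group `Ext¹_ℤ(A, C)` (as a type), computed in the
category of `ℤ`-modules, i.e. abelian groups. -/
noncomputable abbrev Ext1 (A C : Type) [AddCommGroup A] [AddCommGroup C] : Type _ :=
  ((Ext ℤ (ModuleCat.{0} ℤ) 1).obj (Opposite.op (ModuleCat.of ℤ A))).obj (ModuleCat.of ℤ C)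

/-- An abelian group `A` is a Whitehead group if `Ext¹_ℤ(A, ℤ) = 0`. -/
def IsWhitehead (A : Type) [AddCommGroup A] : Prop := Subsingleton (Ext1 A ℤ)


lemma retract_of_dual_ne_zero (B : Type) [AddCommGroup B] (h2 : ∃ f : B →+ ℤ, f ≠ 0) :
    ∃ (q : (B →+ ℤ) →+ ℤ) (s : ℤ →+ (B →+ ℤ)), q.comp s = AddMonoidHom.id ℤ := by
  obtain ⟨f, hf⟩ := h2
  obtain ⟨b, hb⟩ : ∃ b, f b ≠ 0 := by
    by_contra h; push_neg at h; exact hf (AddMonoidHom.ext h)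
  set E : (B →+ ℤ) →+ ℤ := AddMonoidHom.mk' (fun g => g b) (fun g h => rfl) with hE
  obtain ⟨m, hm⟩ := Int.subgroup_cyclic E.range
  have hdvd : ∀ g : B →+ ℤ, m ∣ E g := by
    intro g
    have : E g ∈ AddSubgroup.closure ({m} : Set ℤ) := by rw [← hm]; exact ⟨g, rfl⟩
    rw [AddSubgroup.mem_closure_singleton] at this
    obtain ⟨n, hn⟩ := this
    exact ⟨n, by rw [← hn]; simp [zsmul_eq_mul, Int.mul_comm]⟩
  have hm0 : m ≠ 0 := by
    intro h0
    have := hdvd f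
    rw [h0] at this
    exact hb (by simpa [hE] using this)
  obtain ⟨g₀, hg₀⟩ : m ∈ E.range := by
    rw [hm]; exact AddSubgroup.subset_closure rfl
  refine ⟨AddMonoidHom.mk' (fun g => E g / m) ?_, zmultiplesHom _ g₀, ?_⟩
  · intro g h
    obtain ⟨c, hc⟩ := hdvd g
    obtain ⟨d, hd⟩ := hdvd h
    simp only [map_add, hc, hd, ← Int.mul_add]
    rw [Int.mul_ediv_cancel_left _ hm0, Int.mul_ediv_cancel_left _ hm0,
      Int.mul_ediv_cancel_left _ hm0]
  · ext
    simp [hg₀, Int.ediv_self hm0]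

/-- If `Ext¹(A, B*) = 0` and `B* = Hom(B, ℤ)` is nonzero, then `A` is a Whitehead group. -/
theorem whitehead_of_ext_dual_eq_zero (A B : Type) [AddCommGroup A] [AddCommGroup B]
    (h1 : Subsingleton (Ext1 A (B →+ ℤ))) (h2 : ∃ f : B →+ ℤ, f ≠ 0) :
    IsWhitehead A := by
  obtain ⟨q, s, hqs⟩ := retract_of_dual_ne_zero B h2
  let F := (Ext ℤ (ModuleCat.{0} ℤ) 1).obj (Opposite.op (ModuleCat.of ℤ A))
  let i : ModuleCat.of ℤ ℤ ⟶ ModuleCat.of ℤ (B →+ ℤ) := ModuleCat.ofHom s.toIntLinearMap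
  let p : ModuleCat.of ℤ (B →+ ℤ) ⟶ ModuleCat.of ℤ ℤ := ModuleCat.ofHom q.toIntLinearMap
  have hip : i ≫ p = 𝟙 _ := by
    ext x
    exact DFunLike.congr_fun hqs 1
  have h3 : F.map i ≫ F.map p = 𝟙 _ := by rw [← F.map_comp, hip, F.map_id]
  constructor
  intro x y
  have hx : (F.map p) ((F.map i) x) = x := by
    rw [← CategoryTheory.comp_apply, h3, CategoryTheory.id_apply]
  have hy : (F.map p) ((F.map i) y) = y := by
    rw [← CategoryTheory.comp_apply, h3, CategoryTheory.id_apply]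
  rw [← hx, ← hy]
  congr 1
  exact @Subsingleton.elim _ h1 _ _
end

section
/- Let C be a nonzero separable torsion-free abelian group and let A be an abelian group with Ext^1_ℤ(A, C) = 0. Then A is a Whitehead group. -/
open CategoryTheory

/-- A (torsion-free) abelian group `C` is separable if every finite subset of `C` is
contained in a finitely generated direct summand of `C`. -/
def IsSeparableGroup (C : Type) [AddCommGroup C] : Prop :=
  ∀ F : Finset C, ∃ S T : AddSubgroup C, S.FG ∧ (F : Set C) ⊆ S ∧ IsCompl S T

/-- `ℤ` is a retract of a nonzero separable torsion-free abelian group. -/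
theorem exists_retract_of_separable (C : Type) [AddCommGroup C]
    (hC0 : Nontrivial C) (hCtf : NoZeroSMulDivisors ℤ C) (hCsep : IsSeparableGroup C) :
    ∃ (g : ℤ →ₗ[ℤ] C) (f : C →ₗ[ℤ] ℤ), f.comp g = LinearMap.id := by
  obtain ⟨c, hc⟩ := exists_ne (0 : C)
  obtain ⟨S, T, hSfg, hcS, hST⟩ := hCsep {c}
  set S' : Submodule ℤ C := AddSubgroup.toIntSubmodule S with hS'
  set T' : Submodule ℤ C := AddSubgroup.toIntSubmodule T with hT'
  have hcompl : IsCompl S' T' := AddSubgroup.toIntSubmodule.isCompl hST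
  have hfg : S'.FG := by
    rw [Submodule.fg_iff_addSubgroup_fg]
    exact hSfg
  have : Module.Finite ℤ S' := Module.Finite.iff_fg.mpr hfg
  have : Module.Free ℤ S' := Module.free_of_finite_type_torsion_free'
  have hnt : Nontrivial S' := by
    refine ⟨⟨c, hcS (by simp)⟩, 0, ?_⟩
    simp [Subtype.ext_iff, hc]
  let B := Module.Free.chooseBasis ℤ S'
  have : Nonempty (Module.Free.ChooseBasisIndex ℤ S') := B.index_nonempty
  obtain ⟨i⟩ := this
  refine ⟨LinearMap.toSpanSingleton ℤ C (B i : C),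
    (B.coord i).comp (S'.projectionOnto T' hcompl), ?_⟩
  apply LinearMap.ext_ring
  simp only [LinearMap.comp_apply, LinearMap.toSpanSingleton_apply, one_smul, LinearMap.id_apply]
  rw [Submodule.projectionOnto_apply_left hcompl (B i)]
  simp

/-- If `C` is a nonzero separable torsion-free abelian group and `Ext¹(A, C) = 0`,
then `A` is a Whitehead group. -/
theorem whitehead_of_ext_separable_eq_zero (A C : Type) [AddCommGroup A] [AddCommGroup C]
    (hC0 : Nontrivial C) (hCtf : NoZeroSMulDivisors ℤ C) (hCsep : IsSeparableGroup C)
    (hext : Subsingleton (Ext1 A C)) :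
    IsWhitehead A := by
  obtain ⟨g, f, hfg⟩ := exists_retract_of_separable C hC0 hCtf hCsep
  unfold IsWhitehead
  set F := (Ext ℤ (ModuleCat.{0} ℤ) 1).obj (Opposite.op (ModuleCat.of ℤ A)) with hF
  let gC : ModuleCat.of ℤ ℤ ⟶ ModuleCat.of ℤ C := ModuleCat.ofHom g
  let fC : ModuleCat.of ℤ C ⟶ ModuleCat.of ℤ ℤ := ModuleCat.ofHom f
  have hcomp : gC ≫ fC = 𝟙 _ := by
    exact ModuleCat.hom_ext hfg
  constructor
  intro x y
  have hx : (F.map fC) ((F.map gC) x) = x := by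
    have := congrArg F.map hcomp
    rw [F.map_comp, F.map_id] at this
    exact congrArg (· x) (congrArg ConcreteCategory.hom this)
  have hy : (F.map fC) ((F.map gC) y) = y := by
    have := congrArg F.map hcomp
    rw [F.map_comp, F.map_id] at this
    exact congrArg (· y) (congrArg ConcreteCategory.hom this)
  rw [← hx, ← hy, Subsingleton.elim ((F.map gC) x) ((F.map gC) y)]
end

section
/- If B is a Whitehead group, then the canonical evaluation map B → B** = Hom(Hom(B, ℤ), ℤ), sending b to the homomorphism f ↦ f(b), is injective. -/
open CategoryTheory

/-- The canonical evaluation map `B → B** = Hom(Hom(B, ℤ), ℤ)`, `b ↦ (f ↦ f b)`. -/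
def evalHom (B : Type) [AddCommGroup B] : B →+ ((B →+ ℤ) →+ ℤ) where
  toFun b :=
    { toFun := fun f => f b
      map_zero' := rfl
      map_add' := fun f g => rfl }
  map_zero' := by ext f; simp
  map_add' := fun x y => by ext f; simp

namespace WP
noncomputable section

abbrev D : Type := AddCircle (1 : ℚ)

def mkHom (X Y : ModuleCat.{0} ℤ) (f : X →+ Y) : X ⟶ Y :=
  ModuleCat.ofHom (@LinearMap.mk ℤ ℤ _ _ (RingHom.id ℤ) X Y _ _ X.isModule Y.isModule
    { toFun := f, map_add' := f.map_add }
    (fun n x => by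
      simp only [RingHom.id_apply]
      convert map_zsmul f n x <;> ext <;> apply int_smul_eq_zsmul))

@[simp] lemma mkHom_apply (X Y : ModuleCat.{0} ℤ) (f : X →+ Y) (x : X) :
    mkHom X Y f x = f x := rfl

theorem lift_of_whitehead (B : Type) [AddCommGroup B] (hB : IsWhitehead B)
    (χ : B →+ D) : ∃ g : B →+ ℚ, ∀ x : B, ((g x : ℚ) : D) = χ x := by
  classical
  set M : ModuleCat.{0} ℤ := ModuleCat.of ℤ B with hM
  set Y : ModuleCat.{0} ℤ := ModuleCat.of ℤ ℤ with hY
  set P : ProjectiveResolution M := ProjectiveResolution.of M with hP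
  set K := P.complex.linearYonedaObj ℤ Y with hK
  have hsub : Subsingleton (K.homology 1) := by
    have h1 : Subsingleton (Ext1 B ℤ) := hB
    have e := P.isoExt (R := ℤ) 1 Y
    have e2 : (Ext1 B ℤ) ≃ (K.homology 1) := ((forget _).mapIso e).toEquiv
    exact Equiv.subsingleton e2.symm
  have hex : K.ExactAt 1 :=
    (HomologicalComplex.exactAt_iff_isZero_homology _ _).2
      (ModuleCat.isZero_of_subsingleton _)
  have hex' := (HomologicalComplex.exactAt_iff' K 0 1 2 (by simp) (by simp)).1 hex
  rw [ShortComplex.moduleCat_exact_iff] at hex'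
  -- the augmentation
  set ε : P.complex.X 0 ⟶ M := P.π.f 0 with hε
  have hεsurj : Function.Surjective ε := by
    rw [← ModuleCat.epi_iff_surjective]; exact (inferInstance : Epi (P.π.f 0))
  set Qc : ModuleCat.{0} ℤ := ModuleCat.of ℤ ℚ with hQc
  set Dc : ModuleCat.{0} ℤ := ModuleCat.of ℤ D with hDc
  set qmc : Qc ⟶ Dc := mkHom Qc Dc
    ((QuotientAddGroup.mk' (AddSubgroup.zmultiples (1:ℚ)))) with hqmc
  have hqmcoe : ∀ q : ℚ, qmc q = (q : D) := fun _ => rfl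
  have hqmepi : Epi qmc := by
    rw [ModuleCat.epi_iff_surjective]
    exact fun d => Quotient.exists_rep d
  set χc : M ⟶ Dc := mkHom M Dc χ with hχc
  have hχcoe : ∀ b : B, χc b = χ b := fun _ => rfl
  have : Projective (P.complex.X 0) := P.projective 0
  set h : P.complex.X 0 ⟶ Qc := Projective.factorThru (ε ≫ χc) qmc with hh0
  have hh : h ≫ qmc = ε ≫ χc := Projective.factorThru_comp _ _
  have hhx : ∀ x : P.complex.X 0, qmc (h x) = χ (ε x) := by
    intro x
    have h1 := ConcreteCategory.congr_hom hh x
    exact h1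
  set d10 := P.complex.d 1 0 with hd10
  have hd10ε : ∀ y, ε (d10 y) = 0 := by
    intro y
    have h1 : d10 ≫ ε = 0 := P.complex_d_comp_π_f_zero
    have := ConcreteCategory.congr_hom h1 y
    simpa using this
  have hint : ∀ y : P.complex.X 1, ∃ m : ℤ, h (d10 y) = (m : ℚ) := by
    intro y
    obtain ⟨q, hq⟩ : ∃ q : ℚ, h (d10 y) = q := ⟨h (d10 y), rfl⟩
    have h0 : ((q : ℚ) : D) = 0 := by
      rw [← hqmcoe, ← hq, hhx, hd10ε, map_zero]
    rw [AddCircle.coe_eq_zero_iff] at h0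
    obtain ⟨n, hn⟩ := h0
    refine ⟨n, ?_⟩
    rw [hq, ← hn, zsmul_eq_mul, mul_one]
  have hcast : ∀ y : P.complex.X 1, ((h (d10 y)).num : ℚ) = h (d10 y) := by
    intro y
    obtain ⟨m, hm⟩ := hint y
    rw [hm, Rat.num_intCast]
  set φ : P.complex.X 1 ⟶ Y := mkHom _ Y
    { toFun := fun y => (h (d10 y)).num
      map_zero' := by simp
      map_add' := by
        intro a b
        have : ((h (d10 (a+b))).num : ℚ) = (((h (d10 a)).num + (h (d10 b)).num : ℤ) : ℚ) := by
          push_cast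
          rw [hcast, hcast, hcast, map_add, map_add]
        exact_mod_cast this } with hφ
  have hφx : ∀ y, φ y = (h (d10 y)).num := fun _ => rfl
  have hone : K.d 1 2 φ = P.complex.d 2 1 ≫ φ := by
    rw [ChainComplex.linearYonedaObj_d]
    rfl
  have hcocycle : K.d 1 2 φ = 0 := by
    rw [hone]
    have key : (P.complex.d 2 1 ≫ φ : P.complex.X 2 ⟶ Y) = 0 := by
      refine ConcreteCategory.ext_apply fun x => ?_
      have hzero : d10 (P.complex.d 2 1 x) = 0 := by
        have h1 : P.complex.d 2 1 ≫ d10 = 0 := P.complex.d_comp_d 2 1 0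
        have := ConcreteCategory.congr_hom h1 x
        simpa using this
      have : φ (P.complex.d 2 1 x) = ((0 : ℚ)).num := by rw [hφx, hzero, map_zero]
      simpa using this
    exact key
  have hψ1 : ∃ ψ : P.complex.X 0 ⟶ Y, d10 ≫ ψ = φ := by
    obtain ⟨ψ₀, hψ₀⟩ := hex' φ hcocycle
    refine ⟨ψ₀, ?_⟩
    have h2 : K.d 0 1 ψ₀ = d10 ≫ (ψ₀ : P.complex.X 0 ⟶ Y) := by
      rw [ChainComplex.linearYonedaObj_d]
      rfl
    rw [← h2]
    exact hψ₀
  obtain ⟨ψ, hψ'⟩ := hψ1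
  set ι : Y ⟶ Qc := mkHom Y Qc (Int.castAddHom ℚ) with hι
  set h' : P.complex.X 0 ⟶ Qc := h - (ψ ≫ ι) with hh'
  have hh'x : ∀ u : P.complex.X 0, h' u = h u - ι (ψ u) := by
    intro u
    rw [hh']
    rfl
  have hh'd : ∀ y : P.complex.X 1, h' (d10 y) = 0 := by
    intro y
    have h1 : ψ (d10 y) = φ y := by
      have := ConcreteCategory.congr_hom hψ' y
      simpa using this
    have h2 : ι (φ y) = ((h (d10 y)).num : ℚ) := rfl
    rw [hh'x, h1, h2, hcast, sub_self]
  have hexact0 := P.exact₀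
  rw [ShortComplex.moduleCat_exact_iff] at hexact0
  have hker : ∀ u : P.complex.X 0, ε u = 0 → h' u = 0 := by
    intro u hu
    obtain ⟨v, hv⟩ := hexact0 u hu
    have hv' : d10 v = u := hv
    rw [← hv', hh'd]
  set s : B → P.complex.X 0 := Function.surjInv hεsurj with hs
  have hsx : ∀ b : B, ε (s b) = b := fun b => Function.surjInv_eq hεsurj b
  refine ⟨{ toFun := fun b => h' (s b)
            map_zero' := ?_
            map_add' := ?_ }, ?_⟩
  · exact hker _ (hsx 0)
  · intro a b
    have h1 : ε (s (a+b) - s a - s b) = 0 := by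
      rw [map_sub, map_sub, hsx, hsx, hsx, sub_sub, sub_eq_zero]
    have h2 := hker _ h1
    rw [map_sub, map_sub, sub_sub, sub_eq_zero] at h2
    exact h2
  · intro x
    show qmc (h' (s x)) = χ x
    have h1 : qmc (h' (s x)) = qmc (h (s x)) - qmc (ι (ψ (s x))) := by
      rw [hh'x, map_sub]
    obtain ⟨m, hm⟩ : ∃ m : ℤ, ψ (s x) = m := ⟨ψ (s x), rfl⟩
    have h2 : qmc (ι (ψ (s x))) = 0 := by
      rw [hm]
      have h3 : qmc (ι (m : ℤ)) = ((m : ℚ) : D) := rfl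
      rw [h3, AddCircle.coe_eq_zero_iff]
      exact ⟨m, by rw [zsmul_eq_mul, mul_one]⟩
    rw [h1, h2, sub_zero, hhx, hsx]

def coeD : ℚ →+ D := QuotientAddGroup.mk' (AddSubgroup.zmultiples (1:ℚ))

lemma coeD_apply (q : ℚ) : coeD q = (q : D) := rfl

lemma coeD_eq_zero_iff (q : ℚ) : coeD q = 0 ↔ ∃ m : ℤ, q = (m : ℚ) := by
  rw [coeD_apply, AddCircle.coe_eq_zero_iff]
  constructor
  · rintro ⟨n, hn⟩; exact ⟨n, by rw [← hn, zsmul_eq_mul, mul_one]⟩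
  · rintro ⟨n, hn⟩; exact ⟨n, by rw [hn, zsmul_eq_mul, mul_one]⟩

def sig (z : ℕ → ℤ) : ℕ → ℤ
  | 0 => 0
  | (k+1) => sig z k + (if (2:ℤ)^(k+1) ∣ (sig z k - z k) then 2^k else 0)

lemma sig_compat (z : ℕ → ℤ) (k i : ℕ) : (2:ℤ)^k ∣ (sig z (k+i) - sig z k) := by
  induction i with
  | zero => simp
  | succ i ih =>
      have : sig z (k+(i+1)) - sig z k
          = (sig z (k+i) - sig z k) + (if (2:ℤ)^(k+i+1) ∣ (sig z (k+i) - z (k+i)) then 2^(k+i) else 0) := by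
        show sig z ((k+i)+1) - sig z k = _
        rw [sig]
        ring
      rw [this]
      refine dvd_add ih ?_
      split
      · exact pow_dvd_pow 2 (Nat.le_add_right k i)
      · exact dvd_zero _

lemma sig_avoid (z : ℕ → ℤ) (k : ℕ) : ¬ ((2:ℤ)^(k+1) ∣ (sig z (k+1) - z k)) := by
  intro hdvd
  by_cases hcase : (2:ℤ)^(k+1) ∣ (sig z k - z k)
  · have heq : sig z (k+1) - z k = (sig z k - z k) + 2^k := by
      rw [sig, if_pos hcase]; ring
    rw [heq] at hdvd
    have h2 : (2:ℤ)^(k+1) ∣ (2:ℤ)^k := (dvd_add_right hcase).mp hdvd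
    have := Int.le_of_dvd (by positivity) h2
    have h3 : (2:ℤ)^k < (2:ℤ)^(k+1) := by
      exact pow_lt_pow_right₀ one_lt_two (Nat.lt_succ_self k)
    omega
  · have heq : sig z (k+1) - z k = sig z k - z k := by
      rw [sig, if_neg hcase]; ring
    rw [heq] at hdvd
    exact hcase hdvd

theorem no_dyadic_chain (B : Type) [AddCommGroup B]
    (lift : ∀ χ : B →+ D, ∃ g : B →+ ℚ, ∀ x : B, ((g x : ℚ) : D) = χ x)
    (htf : ∀ (x : B) (n : ℤ), n ≠ 0 → n • x = 0 → x = 0)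
    (x : ℕ → B) (hx0 : x 0 ≠ 0) (hdiv : ∀ k, (2:ℤ) • x (k+1) = x k) : False := by
  classical
  set z : ℕ → ℤ := fun n => Denumerable.ofNat ℤ n with hz
  set σ : ℕ → ℤ := sig z with hσ
  -- basic chain facts
  have hpow : ∀ k i, x k = (2:ℤ)^i • x (k+i) := by
    intro k i
    induction i with
    | zero => simp
    | succ i ih =>
        rw [ih, ← hdiv (k+i)]
        rw [smul_smul]
        have : (k + (i+1)) = ((k+i)+1) := by omega
        rw [this]
        ring_nf
  have hxne : ∀ k, x k ≠ 0 := by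
    intro k hk
    apply hx0
    have h1 := hpow 0 k
    rw [Nat.zero_add, hk, smul_zero] at h1
    exact h1
  have hcancel : ∀ (n m : ℤ) (k : ℕ), n • x k = m • x k → n = m := by
    intro n m k hnm
    by_contra hne
    have h1 : (n - m) • x k = 0 := by rw [sub_smul, hnm, sub_self]
    exact hxne k (htf (x k) (n-m) (sub_ne_zero.mpr hne) h1)
  -- values in D
  set v : ℕ → D := fun k => coeD ((σ k : ℚ) / 2^k) with hv
  have hvstep : ∀ k i, ((2:ℤ)^i) • v (k+i) = v k := by
    intro k i
    have h1 : ((2:ℤ)^i) • v (k+i) = coeD ((2^i * σ (k+i) : ℚ) / 2^(k+i)) := by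
      rw [hv]
      dsimp only
      rw [← map_zsmul coeD]
      congr 1
      rw [zsmul_eq_mul]
      push_cast
      ring
    have h2 : ((2:ℚ)^i * σ (k+i)) / 2^(k+i) = (σ (k+i) : ℚ) / 2^k := by
      rw [pow_add]
      field_simp
    rw [h1, h2]
    have h3 : coeD ((σ (k+i) : ℚ)/2^k) - coeD ((σ k : ℚ)/2^k) = 0 := by
      rw [← map_sub, coeD_eq_zero_iff]
      obtain ⟨c, hc⟩ := sig_compat z k i
      refine ⟨c, ?_⟩
      rw [div_sub_div_same]
      rw [show ((σ (k+i) : ℚ) - σ k) = ((σ (k+i) - σ k : ℤ) : ℚ) by push_cast; ring]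
      rw [hc]
      push_cast
      field_simp
    have := sub_eq_zero.mp h3
    rw [this]
  -- well-definedness of values on combinations
  have hwd3 : ∀ (k1 k2 k3 : ℕ) (n1 n2 n3 : ℤ),
      n3 • x k3 = n1 • x k1 + n2 • x k2 → n3 • v k3 = n1 • v k1 + n2 • v k2 := by
    intro k1 k2 k3 n1 n2 n3 hrel
    set l := max k3 (max k1 k2) with hl
    have hk1 : k1 ≤ l := le_max_of_le_right (le_max_left _ _)
    have hk2 : k2 ≤ l := le_max_of_le_right (le_max_right _ _)
    have hk3 : k3 ≤ l := le_max_left _ _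
    have ex : ∀ (k : ℕ), k ≤ l → ∀ (n : ℤ),
        (n • x k = (n * 2^(l-k)) • x l) ∧ (n • v k = (n * 2^(l-k)) • v l) := by
      intro k hk n
      have hxx : x k = (2:ℤ)^(l-k) • x l := by
        have := hpow k (l-k)
        rwa [Nat.add_sub_cancel' hk] at this
      have hvv : ((2:ℤ)^(l-k)) • v l = v k := by
        have := hvstep k (l-k)
        rwa [Nat.add_sub_cancel' hk] at this
      constructor
      · rw [hxx, smul_smul]
      · rw [← hvv, smul_smul]
    obtain ⟨hx1, hv1⟩ := ex k1 hk1 n1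
    obtain ⟨hx2, hv2⟩ := ex k2 hk2 n2
    obtain ⟨hx3, hv3⟩ := ex k3 hk3 n3
    rw [hx1, hx2, hx3, ← add_smul] at hrel
    have heq := hcancel _ _ _ hrel
    rw [hv1, hv2, hv3, heq, add_smul]
  -- the subgroup U
  set U : AddSubgroup B :=
    { carrier := {u | ∃ (k : ℕ) (n : ℤ), u = n • x k}
      zero_mem' := ⟨0, 0, by simp⟩
      add_mem' := by
        rintro a b ⟨k, n, rfl⟩ ⟨j, m, rfl⟩
        set l := max k j with hl
        have h1 : n • x k = (n * 2^(l-k)) • x l := by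
          have hx : x k = (2:ℤ)^(l-k) • x l := by
            have := hpow k (l-k)
            rwa [Nat.add_sub_cancel' (le_max_left _ _)] at this
          rw [hx, smul_smul]
        have h2 : m • x j = (m * 2^(l-j)) • x l := by
          have hx : x j = (2:ℤ)^(l-j) • x l := by
            have := hpow j (l-j)
            rwa [Nat.add_sub_cancel' (le_max_right _ _)] at this
          rw [hx, smul_smul]
        exact ⟨l, n * 2^(l-k) + m * 2^(l-j), by rw [h1, h2, add_smul]⟩
      neg_mem' := by
        rintro a ⟨k, n, rfl⟩
        exact ⟨k, -n, by rw [neg_smul]⟩ } with hU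
  -- the character on U
  have hsel : ∀ u : U, ∃ p : ℕ × ℤ, (u : B) = p.2 • x p.1 := by
    rintro ⟨u, k, n, hu⟩
    exact ⟨(k, n), hu⟩
  choose p hp using hsel
  set F : U → D := fun u => (p u).2 • v (p u).1 with hF
  have hFval : ∀ (u : U) (k : ℕ) (n : ℤ), (u : B) = n • x k → F u = n • v k := by
    intro u k n hu
    have hrel : (p u).2 • x (p u).1 = n • x k + (0:ℤ) • x k := by
      rw [zero_smul, add_zero, ← hu]
      exact (hp u).symm
    have := hwd3 k k (p u).1 n 0 (p u).2 hrel
    rw [hF]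
    dsimp only
    rw [this, zero_smul, add_zero]
  have hFadd : ∀ u w : U, F (u + w) = F u + F w := by
    intro u w
    have hrel : (p (u+w)).2 • x (p (u+w)).1 = (p u).2 • x (p u).1 + (p w).2 • x (p w).1 := by
      rw [← hp u, ← hp w, ← hp (u+w)]
      rfl
    have := hwd3 (p u).1 (p w).1 (p (u+w)).1 (p u).2 (p w).2 (p (u+w)).2 hrel
    exact this
  set χ₀ : U →+ D := AddMonoidHom.mk' F hFadd with hχ₀
  -- extend to B
  have hext : ∃ χ : B →+ D, ∀ u : U, χ (u : B) = χ₀ u := by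
    have hinj : Function.Injective (U.subtype.toIntLinearMap) := Subtype.coe_injective
    obtain ⟨χ, hχ⟩ := CharacterModule.dual_surjective_of_injective (R := ℤ)
      U.subtype.toIntLinearMap hinj χ₀
    refine ⟨χ, fun u => ?_⟩
    have := DFunLike.congr_fun hχ u
    simp [CharacterModule.dual_apply] at this
    exact this
  obtain ⟨χ, hχ⟩ := hext
  -- lift to ℚ
  obtain ⟨g, hg⟩ := lift χ
  set q : ℕ → ℚ := fun k => g (x k) with hq
  have hmem : ∀ k, x k ∈ U := fun k => ⟨k, 1, (one_smul ℤ (x k)).symm⟩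
  have hqv : ∀ k, coeD (q k) = v k := by
    intro k
    have h1 : coeD (q k) = χ (x k) := hg (x k)
    have h2 : χ (x k) = χ₀ ⟨x k, hmem k⟩ := hχ ⟨x k, hmem k⟩
    have h3 : χ₀ ⟨x k, hmem k⟩ = F ⟨x k, hmem k⟩ := rfl
    have h4 : F ⟨x k, hmem k⟩ = (1:ℤ) • v k :=
      hFval ⟨x k, hmem k⟩ k 1 (one_smul ℤ (x k)).symm
    rw [h1, h2, h3, h4, one_smul]
  -- integer witnesses
  have hw : ∀ k, ∃ w : ℤ, q k - (σ k : ℚ)/2^k = (w : ℚ) := by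
    intro k
    rw [← coeD_eq_zero_iff, map_sub, hqv]
    rw [hv]
    dsimp only
    rw [sub_self]
  choose w hwspec using hw
  have hqpow : ∀ k, q 0 = 2^k * q k := by
    intro k
    have h1 := hpow 0 k
    rw [Nat.zero_add] at h1
    have := congrArg g h1
    rw [map_zsmul] at this
    rw [hq]
    dsimp only
    rw [this, zsmul_eq_mul]
    push_cast
    ring
  have h0 : q 0 = (w 0 : ℚ) := by
    have h1 := hwspec 0
    have h2 : (σ 0 : ℚ) = 0 := by rw [hσ]; simp [sig]
    rw [h2] at h1
    simpa using h1
  have hkey : ∀ k, w 0 - σ k = 2^k * w k := by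
    intro k
    have h1 : (w 0 : ℚ) - σ k = 2^k * w k := by
      have h2 := hwspec k
      have h3 := hqpow k
      rw [h0] at h3
      have h4 : (2:ℚ)^k ≠ 0 := by positivity
      field_simp at h2
      -- h2 : q k * 2^k - σ k = w k * 2^k  (roughly)
      rw [h3]
      nlinarith [h2]
    exact_mod_cast h1
  -- contradiction via enumeration
  set m : ℕ := Encodable.encode (w 0) with hm
  have hzm : z m = w 0 := by
    rw [hz]
    dsimp only
    rw [hm]
    exact Denumerable.ofNat_encode (w 0)
  have havoid := sig_avoid z m
  apply havoid
  rw [hzm]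
  have h5 : sig z (m+1) - w 0 = -(2^(m+1) * w (m+1)) := by
    have := hkey (m+1)
    rw [hσ] at this
    omega
  rw [h5]
  exact dvd_neg.mpr ⟨w (m+1), rfl⟩

lemma exists_intValued {B : Type} [AddCommGroup B] (g : B →+ ℚ)
    (h : ∀ x, ∃ m : ℤ, g x = (m : ℚ)) : ∃ f : B →+ ℤ, ∀ x, ((f x : ℤ) : ℚ) = g x := by
  have hcast : ∀ x, (((g x).num : ℤ) : ℚ) = g x := by
    intro x
    obtain ⟨m, hm⟩ := h x
    rw [hm, Rat.num_intCast]
  refine ⟨{ toFun := fun x => (g x).num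
            map_zero' := by simp
            map_add' := ?_ }, hcast⟩
  intro a b
  have : (((g (a+b)).num : ℤ) : ℚ) = (((g a).num + (g b).num : ℤ) : ℚ) := by
    push_cast
    rw [hcast, hcast, hcast, map_add]
  exact_mod_cast this

-- torsion-freeness
theorem torsion_free (B : Type) [AddCommGroup B]
    (lift : ∀ χ : B →+ D, ∃ g : B →+ ℚ, ∀ x : B, ((g x : ℚ) : D) = χ x) :
    ∀ (x : B) (n : ℤ), n ≠ 0 → n • x = 0 → x = 0 := by
  intro x n hn hnx
  by_contra hx
  obtain ⟨χ, hχ⟩ := CharacterModule.exists_character_apply_ne_zero_of_ne_zero hx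
  obtain ⟨g, hg⟩ := lift χ
  have h1 : (n : ℚ) * g x = 0 := by
    have := congrArg g hnx
    rw [map_zsmul, map_zero, zsmul_eq_mul] at this
    exact this
  have h2 : g x = 0 := by
    have : (n:ℚ) ≠ 0 := Int.cast_ne_zero.mpr hn
    exact (mul_eq_zero.mp h1).resolve_left this
  apply hχ
  have := hg x
  rw [h2] at this
  exact this.symm.trans (map_zero coeD)

-- the separated case
theorem case_sep (B : Type) [AddCommGroup B]
    (lift : ∀ χ : B →+ D, ∃ g : B →+ ℚ, ∀ x : B, ((g x : ℚ) : D) = χ x)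
    (c : B) (hcZ : ∀ f : B →+ ℤ, f c = 0) (hc2 : ¬ ∃ y : B, c = (2:ℤ) • y) : False := by
  classical
  set H2 : AddSubgroup B :=
    { carrier := {u | ∃ y : B, u = (2:ℤ) • y}
      zero_mem' := ⟨0, by simp⟩
      add_mem' := by
        rintro a b ⟨y, rfl⟩ ⟨w, rfl⟩
        exact ⟨y + w, by rw [smul_add]⟩
      neg_mem' := by
        rintro a ⟨y, rfl⟩
        exact ⟨-y, by rw [smul_neg]⟩ } with hH2
  set mk : B →+ B ⧸ H2 := QuotientAddGroup.mk' H2 with hmk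
  have hcne : mk c ≠ 0 := by
    intro h
    exact hc2 ((QuotientAddGroup.eq_zero_iff c).mp h)
  obtain ⟨χQ, hχQ⟩ := CharacterModule.exists_character_apply_ne_zero_of_ne_zero hcne
  set χ : B →+ D := (χQ : B ⧸ H2 →+ D).comp mk with hχ
  obtain ⟨g, hg⟩ := lift χ
  -- 2 * g x is an integer for all x
  have h2g : ∀ xx : B, ∃ m : ℤ, (g + g) xx = (m : ℚ) := by
    intro xx
    rw [← coeD_eq_zero_iff]
    have h1 : (g + g) xx = g xx + g xx := rfl
    rw [h1, map_add]
    have h2 : coeD (g xx) = χ xx := hg xx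
    rw [h2, hχ]
    have h3 : χQ (mk xx) + χQ (mk xx) = χQ (mk xx + mk xx) := (map_add χQ _ _).symm
    have h4 : mk xx + mk xx = mk (xx + xx) := (map_add mk _ _).symm
    have h5 : xx + xx ∈ H2 := ⟨xx, by rw [two_zsmul]⟩
    have h6 : mk (xx + xx) = 0 := (QuotientAddGroup.eq_zero_iff _).mpr h5
    show χQ (mk xx) + χQ (mk xx) = 0
    rw [h3, h4, h6, map_zero]
  obtain ⟨f, hf⟩ := exists_intValued (g + g) h2g
  have hfc : f c = 0 := hcZ f
  have h7 : g c + g c = 0 := by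
    have := hf c
    rw [hfc] at this
    have h8 : (g + g) c = g c + g c := rfl
    rw [h8] at this
    simpa using this.symm
  have h9 : g c = 0 := by linarith [h7]
  apply hχQ
  have h10 := hg c
  rw [h9] at h10
  have h11 : χ c = χQ (mk c) := rfl
  rw [← h11, ← h10]
  exact map_zero coeD

end
end WP

/-- If `B` is a Whitehead group, the canonical map `B → B**` is injective. -/
theorem whitehead_eval_injective (B : Type) [AddCommGroup B] (hB : IsWhitehead B) :
    Function.Injective (evalHom B) := by
  classical
  have lift := WP.lift_of_whitehead B hB
  have key : ∀ b : B, (∀ f : B →+ ℤ, f b = 0) → b = 0 := by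
    intro b hb
    by_contra hbne
    have htf := WP.torsion_free B lift
    by_cases hc : ∃ c : B, (∀ f : B →+ ℤ, f c = 0) ∧ ¬ ∃ y, c = (2:ℤ) • y
    · obtain ⟨c, h1, h2⟩ := hc
      exact WP.case_sep B lift c h1 h2
    · push_neg at hc
      have step : ∀ v : {v : B // ∀ f : B →+ ℤ, f v = 0},
          ∃ y : {v : B // ∀ f : B →+ ℤ, f v = 0}, (v : B) = (2:ℤ) • (y : B) := by
        intro v
        obtain ⟨y, hy⟩ := hc v v.2
        refine ⟨⟨y, ?_⟩, hy⟩
        intro f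
        have h1 : (2:ℤ) • f y = 0 := by
          rw [← map_zsmul, ← hy]; exact v.2 f
        rw [two_zsmul] at h1
        omega
      choose nxt hnxt using step
      set xs : ℕ → {v : B // ∀ f : B →+ ℤ, f v = 0} :=
        fun k => Nat.rec ⟨b, hb⟩ (fun _ v => nxt v) k with hxs
      have hdiv : ∀ k, (2:ℤ) • ((xs (k+1) : B)) = (xs k : B) :=
        fun k => (hnxt (xs k)).symm
      exact WP.no_dyadic_chain B lift htf (fun k => (xs k : B)) hbne hdiv
  intro a b hab
  have hfb : ∀ f : B →+ ℤ, f (a - b) = 0 := by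
    intro f
    have h1 : evalHom B a f = evalHom B b f := by rw [hab]
    have h2 : f a = f b := h1
    rw [map_sub, h2, sub_self]
  exact sub_eq_zero.mp (key _ hfb)
end

section
/- Let A and B be free abelian groups, and let A' ≤ A and B' ≤ B be subgroups such that both quotients A/A' and B/B' are free abelian groups. Then the quotient of A ⊗ B by the image of the natural map A' ⊗ B' → A ⊗ B (induced by the inclusions) is a free abelian group. -/
open scoped TensorProduct

open Submodule

theorem submodule_finsupp_free {ι : Type*} (N : Submodule ℤ (ι →₀ ℤ)) :
    Module.Free ℤ N := by
  classical
  letI : LinearOrder ι := IsWellOrder.linearOrder WellOrderingRel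
  haveI : WellFoundedLT ι := inferInstanceAs (IsWellFounded ι WellOrderingRel)
  set S : ι → Submodule ℤ (ι →₀ ℤ) := fun i => Finsupp.supported ℤ ℤ (Set.Iic i) with hS
  set I : ι → Ideal ℤ := fun i => (N ⊓ S i).map (Finsupp.lapply i) with hI
  set c : ι → ℤ := fun i => Submodule.IsPrincipal.generator (I i) with hc
  have hIc : ∀ i, I i = Ideal.span {c i} := fun i =>
    (Submodule.IsPrincipal.span_singleton_generator (I i)).symm
  have hmemS : ∀ (i) (z : ι →₀ ℤ), z ∈ S i ↔ ∀ j ∈ z.support, j ≤ i := by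
    intro i z
    rw [hS]
    simp only [Finsupp.mem_supported, Set.subset_def, Finset.mem_coe, Set.mem_Iic]
  have hex : ∀ i, ∃ v : ι →₀ ℤ, (v ∈ N ∧ v ∈ S i) ∧ v i = c i := by
    intro i
    obtain ⟨v, hv, hvi⟩ := Submodule.mem_map.mp (Submodule.IsPrincipal.generator_mem (I i))
    exact ⟨v, Submodule.mem_inf.mp hv, hvi⟩
  choose x hxN hxS hxi using fun i => (⟨(hex i).choose, ((hex i).choose_spec.1).1,
    ((hex i).choose_spec.1).2, (hex i).choose_spec.2⟩ :
    ∃ v : ι →₀ ℤ, v ∈ N ∧ v ∈ S i ∧ v i = c i)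
  -- membership of coordinates in the ideal, with factorization
  have hfac : ∀ (i) (z : ι →₀ ℤ), z ∈ N → z ∈ S i → ∃ a, a * c i = z i := by
    intro i z hzN hzS
    have : z i ∈ I i := Submodule.mem_map.mpr ⟨z, Submodule.mem_inf.mpr ⟨hzN, hzS⟩, rfl⟩
    rw [hIc i, Ideal.mem_span_singleton'] at this
    exact this
  set σ := {i : ι // c i ≠ 0} with hσ
  set v : σ → (ι →₀ ℤ) := fun s => x s.1 with hv
  set K := Submodule.span ℤ (Set.range v) with hK
  have hxK : ∀ i, c i ≠ 0 → x i ∈ K := fun i hi =>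
    Submodule.subset_span ⟨⟨i, hi⟩, rfl⟩
  -- spanning
  have key : ∀ i, ∀ z, z ∈ N → z ∈ S i → z ∈ K := by
    intro i
    induction i using WellFoundedLT.induction with
    | _ i IH =>
      intro z hzN hzS
      by_cases hz0 : z = 0
      · rw [hz0]; exact K.zero_mem
      · have hsupp : z.support.Nonempty := Finsupp.support_nonempty_iff.mpr hz0
        set k := z.support.max' hsupp with hk
        have hkmem : k ∈ z.support := z.support.max'_mem hsupp
        have hzk : z k ≠ 0 := Finsupp.mem_support_iff.mp hkmem
        have hzSk : z ∈ S k := (hmemS k z).mpr fun j hj => z.support.le_max' j hj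
        have hki : k ≤ i := (hmemS i z).mp hzS k hkmem
        obtain ⟨a, ha⟩ := hfac k z hzN hzSk
        have hck : c k ≠ 0 := fun h => hzk (by rw [← ha, h, mul_zero])
        set y := z - a • x k with hy
        have hyN : y ∈ N := N.sub_mem hzN (N.smul_mem a (hxN k))
        have hySk : y ∈ S k := (S k).sub_mem hzSk ((S k).smul_mem a (hxS k))
        have hyk : y k = 0 := by
          rw [hy]
          simp only [Finsupp.coe_sub, Pi.sub_apply, Finsupp.smul_apply, hxi k, smul_eq_mul, ha]
          ring
        by_cases hy0 : y = 0
        · have : z = a • x k := by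
            have := sub_eq_zero.mp (hy ▸ hy0)
            exact this
          rw [this]; exact K.smul_mem a (hxK k hck)
        · have hysupp : y.support.Nonempty := Finsupp.support_nonempty_iff.mpr hy0
          set m := y.support.max' hysupp with hm
          have hmmem : m ∈ y.support := y.support.max'_mem hysupp
          have hmk : m ≤ k := (hmemS k y).mp hySk m hmmem
          have hmne : m ≠ k := fun h => Finsupp.mem_support_iff.mp hmmem (h ▸ hyk)
          have hmi : m < i := lt_of_lt_of_le (lt_of_le_of_ne hmk hmne) hki
          have hySm : y ∈ S m := (hmemS m y).mpr fun j hj => y.support.le_max' j hj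
          have hyK := IH m hmi y hyN hySm
          have : z = y + a • x k := by rw [hy]; abel
          rw [this]; exact K.add_mem hyK (K.smul_mem a (hxK k hck))
  have hKN : K = N := by
    apply le_antisymm
    · rw [hK, Submodule.span_le]
      rintro _ ⟨s, rfl⟩
      exact hxN s.1
    · intro z hz
      by_cases hz0 : z = 0
      · rw [hz0]; exact K.zero_mem
      · have hsupp : z.support.Nonempty := Finsupp.support_nonempty_iff.mpr hz0
        exact key (z.support.max' hsupp) z hz
          ((hmemS _ z).mpr fun j hj => z.support.le_max' j hj)
  -- linear independence
  have li : LinearIndependent ℤ v := by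
    rw [linearIndependent_iff]
    intro l hl
    by_contra hl0
    have hsupp : l.support.Nonempty := Finsupp.support_nonempty_iff.mpr hl0
    obtain ⟨s0, hs0mem, hs0max⟩ := l.support.exists_max_image (fun s => s.1) hsupp
    have heval := congrArg (fun f : ι →₀ ℤ => f s0.1) hl
    rw [Finsupp.linearCombination_apply, Finsupp.sum] at heval
    simp only [Finsupp.finset_sum_apply, Finsupp.smul_apply, smul_eq_mul,
      Finsupp.coe_zero, Pi.zero_apply] at heval
    rw [Finset.sum_eq_single s0] at heval
    · have : (v s0) s0.1 = c s0.1 := hxi s0.1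
      rw [this] at heval
      exact s0.2 ((mul_eq_zero.mp heval).resolve_left (Finsupp.mem_support_iff.mp hs0mem))
    · intro s hsmem hsne
      have hle : s.1 ≤ s0.1 := hs0max s hsmem
      have hlt : s.1 < s0.1 := lt_of_le_of_ne hle (fun h => hsne (Subtype.ext h))
      have : (v s) s0.1 = 0 := by
        by_contra h
        exact absurd ((hmemS s.1 (x s.1)).mp (hxS s.1) s0.1
          (Finsupp.mem_support_iff.mpr h)) (not_le.mpr hlt)
      rw [this, mul_zero]
    · intro h; exact absurd hs0mem h
  -- assemble the basis of N
  set w : σ → N := fun s => ⟨v s, hKN ▸ hxK s.1 s.2⟩ with hw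
  have li' : LinearIndependent ℤ w :=
    LinearIndependent.of_comp N.subtype (by exact li)
  have htop : Submodule.span ℤ (Set.range w) = ⊤ := by
    apply Submodule.map_injective_of_injective N.injective_subtype
    rw [Submodule.map_span, Submodule.map_top, Submodule.range_subtype, ← Set.range_comp]
    exact (hK ▸ hKN : Submodule.span ℤ (Set.range v) = N)
  exact Module.Free.of_basis (Module.Basis.mk li' htop.ge)

theorem int_module_free_irrel {M : Type*} [AddCommGroup M] (i1 i2 : Module ℤ M)
    (h : @Module.Free ℤ M _ _ i1) : @Module.Free ℤ M _ _ i2 := by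
  haveI := AddCommGroup.uniqueIntModule (M := M)
  rwa [Subsingleton.elim i2 i1]

theorem int_submodule_free {M : Type*} [AddCommGroup M] [Module ℤ M] [Module.Free ℤ M]
    (p : Submodule ℤ M) : Module.Free ℤ p := by
  obtain ⟨ι, b⟩ := Module.Free.exists_basis (R := ℤ) (M := M)
  haveI := submodule_finsupp_free (p.map (b.repr : M ≃ₗ[ℤ] (ι →₀ ℤ)).toLinearMap)
  have h1 : @Module.Free ℤ ↥p _ _ p.module :=
    @Module.Free.of_equiv ℤ ℤ _ _ _ _ _ _ _ p.module _ _ _ _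
      (Submodule.equivMapOfInjective b.repr.toLinearMap b.repr.injective p).symm _
  exact int_module_free_irrel p.module _ h1

open scoped TensorProduct

theorem tensor_quot_free_aux (M N : Type*) [AddCommGroup M] [AddCommGroup N]
    [Module.Free ℤ M] [Module.Free ℤ N]
    (p : Submodule ℤ M) (q : Submodule ℤ N)
    (hp : Module.Free ℤ (M ⧸ p)) (hq : Module.Free ℤ (N ⧸ q)) :
    Module.Free ℤ ((M ⊗[ℤ] N) ⧸
      LinearMap.range (TensorProduct.map p.subtype q.subtype)) := by
  haveI := hp; haveI := hq
  obtain ⟨s, hs⟩ := Module.projective_lifting_property p.mkQ LinearMap.id p.mkQ_surjective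
  obtain ⟨t, ht⟩ := Module.projective_lifting_property q.mkQ LinearMap.id q.mkQ_surjective
  have hs' : ∀ y, p.mkQ (s y) = y := fun y => LinearMap.congr_fun hs y
  have ht' : ∀ y, q.mkQ (t y) = y := fun y => LinearMap.congr_fun ht y
  have hmemp : ∀ a : M, a - s (p.mkQ a) ∈ p := by
    intro a
    rw [← Submodule.Quotient.mk_eq_zero]
    have : p.mkQ (a - s (p.mkQ a)) = 0 := by
      rw [map_sub, hs', sub_self]
    simpa [Submodule.mkQ_apply] using this
  have hmemq : ∀ b : N, b - t (q.mkQ b) ∈ q := by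
    intro b
    rw [← Submodule.Quotient.mk_eq_zero]
    have : q.mkQ (b - t (q.mkQ b)) = 0 := by
      rw [map_sub, ht', sub_self]
    simpa [Submodule.mkQ_apply] using this
  set π : M →ₗ[ℤ] p :=
    LinearMap.codRestrict p (LinearMap.id - s ∘ₗ p.mkQ) (fun a => hmemp a) with hπdef
  set ρ : N →ₗ[ℤ] q :=
    LinearMap.codRestrict q (LinearMap.id - t ∘ₗ q.mkQ) (fun b => hmemq b) with hρdef
  have hπval : ∀ a : M, (π a : M) = a - s (p.mkQ a) := fun a => rfl
  have hρval : ∀ b : N, (ρ b : N) = b - t (q.mkQ b) := fun b => rfl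
  have hπ : ∀ a : M, (π a : M) + s (p.mkQ a) = a := fun a => by
    rw [hπval]; abel
  have hρ : ∀ b : N, (ρ b : N) + t (q.mkQ b) = b := fun b => by
    rw [hρval]; abel
  have hmk0p : ∀ u : p, p.mkQ (u : M) = 0 := fun u =>
    (Submodule.Quotient.mk_eq_zero p).mpr u.2
  have hmk0q : ∀ w : q, q.mkQ (w : N) = 0 := fun w =>
    (Submodule.Quotient.mk_eq_zero q).mpr w.2
  have hπp : ∀ u : p, π (u : M) = u := fun u => by
    apply Subtype.ext
    rw [hπval, hmk0p, map_zero, sub_zero]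
  have hρq : ∀ w : q, ρ (w : N) = w := fun w => by
    apply Subtype.ext
    rw [hρval, hmk0q, map_zero, sub_zero]
  set Φ :=
    LinearMap.prod (TensorProduct.map π q.mkQ) (TensorProduct.map p.mkQ LinearMap.id) with hΦ
  set φ := TensorProduct.map p.subtype q.subtype with hφ
  set Θ :=
    LinearMap.coprod (TensorProduct.map p.subtype t) (TensorProduct.map s LinearMap.id) with hΘ
  have hE : Θ ∘ₗ Φ + φ ∘ₗ (TensorProduct.map π ρ) = LinearMap.id := by
    apply TensorProduct.ext'
    intro a b
    simp only [hΦ, hΘ, hφ, LinearMap.add_apply, LinearMap.comp_apply,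
      TensorProduct.map_tmul, LinearMap.prod_apply, Function.prod, LinearMap.coprod_apply,
      LinearMap.id_apply, Submodule.coe_subtype]
    rw [show (a ⊗ₜ[ℤ] b : M ⊗[ℤ] N) = (↑(π a) : M) ⊗ₜ[ℤ] b + s (p.mkQ a) ⊗ₜ[ℤ] b by
      rw [← TensorProduct.add_tmul, hπ a]]
    rw [show ((↑(π a) : M) ⊗ₜ[ℤ] b : M ⊗[ℤ] N)
        = (↑(π a) : M) ⊗ₜ[ℤ] (↑(ρ b) : N) + (↑(π a) : M) ⊗ₜ[ℤ] t (q.mkQ b) by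
      rw [← TensorProduct.tmul_add, hρ b]]
    abel
  have hcomp : Φ ∘ₗ φ = 0 := by
    apply TensorProduct.ext'
    intro u w
    simp only [hΦ, hφ, LinearMap.comp_apply, TensorProduct.map_tmul,
      LinearMap.prod_apply, Function.prod, Submodule.coe_subtype, LinearMap.zero_apply,
      LinearMap.id_apply]
    rw [hmk0q w, hmk0p u]
    simp [TensorProduct.tmul_zero, TensorProduct.zero_tmul, Prod.mk_eq_zero]
  have hrange : LinearMap.range φ = LinearMap.ker Φ := by
    apply le_antisymm
    · rintro z ⟨w, rfl⟩
      rw [LinearMap.mem_ker]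
      simpa using LinearMap.congr_fun hcomp w
    · intro z hz
      rw [LinearMap.mem_ker] at hz
      have h := LinearMap.congr_fun hE z
      simp only [LinearMap.add_apply, LinearMap.comp_apply, LinearMap.id_apply, hz,
        map_zero, zero_add] at h
      exact ⟨(TensorProduct.map π ρ) z, h⟩
  have hsurj : Function.Surjective Φ := by
    rw [← LinearMap.range_eq_top, eq_top_iff]
    rintro ⟨u, w⟩ -
    have h1 : ∀ u : ↥p ⊗[ℤ] (N ⧸ q), ((u, 0) : _ × ((M ⧸ p) ⊗[ℤ] N)) ∈ LinearMap.range Φ := by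
      intro u
      induction u using TensorProduct.induction_on with
      | zero => exact zero_mem _
      | tmul a' bq =>
        refine ⟨(↑a' : M) ⊗ₜ[ℤ] t bq, ?_⟩
        simp only [hΦ, LinearMap.prod_apply, Function.prod, TensorProduct.map_tmul,
          LinearMap.id_apply]
        rw [hπp a', ht' bq, hmk0p a']
        simp [TensorProduct.zero_tmul]
      | add x y hx hy =>
        have := add_mem hx hy
        simpa using this
    have h2 : ∀ w : (M ⧸ p) ⊗[ℤ] N, ((0, w) : (↥p ⊗[ℤ] (N ⧸ q)) × _) ∈ LinearMap.range Φ := by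
      intro w
      induction w using TensorProduct.induction_on with
      | zero => exact zero_mem _
      | tmul aq b =>
        refine ⟨s aq ⊗ₜ[ℤ] b, ?_⟩
        simp only [hΦ, LinearMap.prod_apply, Function.prod, TensorProduct.map_tmul,
          LinearMap.id_apply]
        have : π (s aq) = 0 := by
          apply Subtype.ext
          rw [hπval, hs']
          simp
        rw [this, hs' aq]
        simp [TensorProduct.zero_tmul]
      | add x y hx hy =>
        have := add_mem hx hy
        simpa using this
    have : ((u, w) : (↥p ⊗[ℤ] (N ⧸ q)) × ((M ⧸ p) ⊗[ℤ] N)) = (u, 0) + (0, w) := by simp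
    rw [this]
    exact add_mem (h1 u) (h2 w)
  have e :=
    (Submodule.quotEquivOfEq _ _ hrange).trans (Φ.quotKerEquivOfSurjective hsurj)
  haveI : Module.Free ℤ ↥p := int_submodule_free p
  exact Module.Free.of_equiv e.symm

/-- If `A` and `B` are free abelian groups and `A' ≤ A`, `B' ≤ B` are subgroups with
`A/A'` and `B/B'` free, then the quotient of `A ⊗ B` by the image of the natural map
`A' ⊗ B' → A ⊗ B` is a free abelian group. -/
theorem tensor_quotient_free (A B : Type) [AddCommGroup A] [AddCommGroup B]
    [Module.Free ℤ A] [Module.Free ℤ B]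
    (A' : AddSubgroup A) (B' : AddSubgroup B)
    (hA : Module.Free ℤ (A ⧸ A')) (hB : Module.Free ℤ (B ⧸ B')) :
    Module.Free ℤ
      ((A ⊗[ℤ] B) ⧸
        LinearMap.range
          (TensorProduct.map A'.subtype.toIntLinearMap B'.subtype.toIntLinearMap)) := by
  have h1 : Module.Free ℤ (A ⧸ A'.toIntSubmodule) := hA
  have h2 : Module.Free ℤ (B ⧸ B'.toIntSubmodule) := hB
  exact tensor_quot_free_aux A B A'.toIntSubmodule B'.toIntSubmodule h1 h2
end
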